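/- In the split graph G' constructed from a graph G (with A a clique, B independent, aᵢ ~ bⱼ iff i = j or vᵢvⱼ ∈ E(G)), any dominating set D' containing some bᵢ can be modified by replacing bᵢ with aᵢ (or removing bᵢ if aᵢ ∈ D') to obtain a dominating set that is no larger and contains no fewer vertices of A. Consequently, if G' has a dominating set of size k then it has a dominating set of size at most k contained entirely in A. -/

import Mathlib

def splitGraph {n : ℕ} (G : SimpleGraph (Fin n)) : SimpleGraph (Fin n ⊕ Fin n) where
  Adj u v :=
    match u, v with
    | .inl i, .inl j => i ≠ j
    | .inl i, .inr j => i = j ∨ G.Adj i j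
    | .inr i, .inl j => j = i ∨ G.Adj j i
    | .inr _, .inr _ => False
  symm := ⟨by
    rintro (i | i) (j | j) h <;> simp_all [ne_comm]⟩
  loopless := ⟨by
    rintro (i | i) h <;> simp_all [G.loopless.irrefl i]⟩

def IsDomSet {V : Type*} (G : SimpleGraph V) (D : Finset V) : Prop :=
  ∀ v, v ∉ D → ∃ d ∈ D, G.Adj d v

/-- The number of vertices of `D` lying on the clique side `A`. -/
def countA {n : ℕ} (D : Finset (Fin n ⊕ Fin n)) : ℕ :=
  (D.filter (fun u => ∃ i, u = Sum.inl i)).card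

lemma swap_lemma {n : ℕ} (G : SimpleGraph (Fin n)) (D : Finset (Fin n ⊕ Fin n))
    (hD : IsDomSet (splitGraph G) D) (i : Fin n) (hi : Sum.inr i ∈ D) :
    IsDomSet (splitGraph G) (insert (Sum.inl i) (D.erase (Sum.inr i))) ∧
    (insert (Sum.inl i) (D.erase (Sum.inr i))).card ≤ D.card ∧
    countA D ≤ countA (insert (Sum.inl i) (D.erase (Sum.inr i))) := by
  refine ⟨?_, ?_, ?_⟩
  · intro v hv
    simp only [Finset.mem_insert, Finset.mem_erase, not_or, not_and] at hv
    obtain ⟨hv1, hv2⟩ := hv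
    by_cases hvi : v = Sum.inr i
    · subst hvi
      exact ⟨Sum.inl i, Finset.mem_insert_self _ _, Or.inl rfl⟩
    · have hvD : v ∉ D := hv2 hvi
      obtain ⟨d, hd, hadj⟩ := hD v hvD
      by_cases hdi : d = Sum.inr i
      · subst hdi
        match v with
        | Sum.inl j =>
          rcases hadj with h | h
          · exact absurd (by rw [h]) hv1
          · refine ⟨Sum.inl i, Finset.mem_insert_self _ _, ?_⟩
            intro hij
            exact G.loopless.irrefl j (by rwa [hij] at h)
        | Sum.inr j => exact absurd hadj (by simp [splitGraph])
      · exact ⟨d, Finset.mem_insert_of_mem (Finset.mem_erase.mpr ⟨hdi, hd⟩), hadj⟩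
  · calc (insert (Sum.inl i) (D.erase (Sum.inr i))).card
        ≤ (D.erase (Sum.inr i)).card + 1 := Finset.card_insert_le _ _
      _ = (D.card - 1) + 1 := by rw [Finset.card_erase_of_mem hi]
      _ ≤ D.card := by
          have : 1 ≤ D.card := Finset.card_pos.mpr ⟨_, hi⟩
          omega
  · unfold countA
    classical
    have h1 : (D.erase (Sum.inr i)).filter (fun u => ∃ j, u = Sum.inl j)
        = D.filter (fun u => ∃ j, u = Sum.inl j) := by
      rw [Finset.filter_erase]
      apply Finset.erase_eq_of_notMem
      simp
    rw [Finset.filter_insert, h1]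
    split_ifs with h
    · exact Finset.card_le_card (Finset.subset_insert _ _)
    · exact absurd ⟨i, rfl⟩ h

lemma clean_lemma {n : ℕ} (G : SimpleGraph (Fin n)) :
    ∀ m : ℕ, ∀ D : Finset (Fin n ⊕ Fin n),
      (D.filter (fun u => ∃ i, u = Sum.inr i)).card ≤ m →
      IsDomSet (splitGraph G) D →
      ∃ D2 : Finset (Fin n ⊕ Fin n), IsDomSet (splitGraph G) D2 ∧ D2.card ≤ D.card ∧
        ∀ u ∈ D2, ∃ i : Fin n, u = Sum.inl i := by
  classical
  intro m
  induction m with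
  | zero =>
    intro D hm hD
    refine ⟨D, hD, le_refl _, ?_⟩
    intro u hu
    match u with
    | Sum.inl i => exact ⟨i, rfl⟩
    | Sum.inr i =>
      exfalso
      have : Sum.inr i ∈ D.filter (fun u => ∃ i, u = Sum.inr i) :=
        Finset.mem_filter.mpr ⟨hu, ⟨i, rfl⟩⟩
      have := Finset.card_pos.mpr ⟨_, this⟩
      omega
  | succ m ih =>
    intro D hm hD
    by_cases hB : ∃ i, Sum.inr i ∈ D
    · obtain ⟨i, hi⟩ := hB
      obtain ⟨hdom, hcard, _⟩ := swap_lemma G D hD i hi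
      set E := insert (Sum.inl i) (D.erase (Sum.inr i)) with hE
      have hmE : (E.filter (fun u => ∃ i, u = Sum.inr i)).card ≤ m := by
        have : E.filter (fun u => ∃ i, u = Sum.inr i)
            = (D.filter (fun u => ∃ i, u = Sum.inr i)).erase (Sum.inr i) := by
          rw [hE, Finset.filter_insert, if_neg (by simp), Finset.filter_erase]
        rw [this, Finset.card_erase_of_mem (Finset.mem_filter.mpr ⟨hi, ⟨i, rfl⟩⟩)]
        omega
      obtain ⟨D2, h1, h2, h3⟩ := ih E hmE hdom
      exact ⟨D2, h1, le_trans h2 hcard, h3⟩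
    · refine ⟨D, hD, le_refl _, ?_⟩
      intro u hu
      match u with
      | Sum.inl i => exact ⟨i, rfl⟩
      | Sum.inr i => exact absurd ⟨i, hu⟩ hB

theorem stmt_8 {n : ℕ} (G : SimpleGraph (Fin n)) :
    (∀ D' : Finset (Fin n ⊕ Fin n), IsDomSet (splitGraph G) D' →
      ∀ i : Fin n, Sum.inr i ∈ D' →
        IsDomSet (splitGraph G) (insert (Sum.inl i) (D'.erase (Sum.inr i))) ∧
        (insert (Sum.inl i) (D'.erase (Sum.inr i))).card ≤ D'.card ∧
        countA D' ≤ countA (insert (Sum.inl i) (D'.erase (Sum.inr i)))) ∧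
    (∀ k : ℕ, ∀ D' : Finset (Fin n ⊕ Fin n),
      IsDomSet (splitGraph G) D' → D'.card = k →
      ∃ D : Finset (Fin n ⊕ Fin n), IsDomSet (splitGraph G) D ∧ D.card ≤ k ∧
        ∀ u ∈ D, ∃ i : Fin n, u = Sum.inl i) := by
  classical
  refine ⟨fun D' hD i hi => swap_lemma G D' hD i hi, ?_⟩
  intro k D' hD hk
  obtain ⟨D2, h1, h2, h3⟩ := clean_lemma G _ D' (le_refl _) hD
  exact ⟨D2, h1, hk ▸ h2, h3⟩
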